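/- Let K ≥ 1 and let a, b : Fin K → ℝ, and suppose kmax : Fin K satisfies b k ≤ b kmax for all k. Define G : ℝ → ℝ by G(w) = ∑_k exp(w * (b k − b kmax)) * exp(a k − a kmax). If there exists k with b k < b kmax, then for every w : ℝ the derivative of G at w is strictly negative; explicitly, deriv G w = ∑_k (b k − b kmax) * exp(w * (b k − b kmax)) * exp(a k − a kmax) < 0. -/

import Mathlib

open Real Finset

theorem Gmax_deriv_neg
    (K : ℕ) (hK : 1 ≤ K) (a b : Fin K → ℝ)
    (kmax : Fin K) (hmax : ∀ k, b k ≤ b kmax)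
    (G : ℝ → ℝ)
    (hG : ∀ w : ℝ, G w = ∑ k, Real.exp (w * (b k - b kmax)) * Real.exp (a k - a kmax))
    (hne : ∃ k, b k < b kmax) :
    ∀ w : ℝ,
      deriv G w = ∑ k, (b k - b kmax) * Real.exp (w * (b k - b kmax)) * Real.exp (a k - a kmax)
      ∧ deriv G w < 0 := by
  intro w
  have hGfun : G = fun w : ℝ => ∑ k, Real.exp (w * (b k - b kmax)) * Real.exp (a k - a kmax) :=
    funext hG
  have hderiv : HasDerivAt G
      (∑ k, (b k - b kmax) * Real.exp (w * (b k - b kmax)) * Real.exp (a k - a kmax)) w := by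
    rw [hGfun]
    apply HasDerivAt.fun_sum
    intro k _
    have h1 : HasDerivAt (fun w : ℝ => w * (b k - b kmax)) (b k - b kmax) w := by
      simpa using (hasDerivAt_id w).mul_const (b k - b kmax)
    have h2 := (h1.exp).mul_const (Real.exp (a k - a kmax))
    refine h2.congr_deriv ?_
    ring
  have hd := hderiv.deriv
  refine ⟨hd, ?_⟩
  rw [hd]
  obtain ⟨k0, hk0⟩ := hne
  have hneg : ∀ k ∈ Finset.univ (α := Fin K),
      (b k - b kmax) * Real.exp (w * (b k - b kmax)) * Real.exp (a k - a kmax) ≤ 0 := by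
    intro k _
    have : b k - b kmax ≤ 0 := by linarith [hmax k]
    exact mul_nonpos_of_nonpos_of_nonneg
      (mul_nonpos_of_nonpos_of_nonneg this (Real.exp_pos (w * (b k - b kmax))).le)
      (Real.exp_pos (a k - a kmax)).le
  refine Finset.sum_neg' hneg ⟨k0, Finset.mem_univ _, ?_⟩
  have hb : b k0 - b kmax < 0 := by linarith
  exact mul_neg_of_neg_of_pos
    (mul_neg_of_neg_of_pos hb (Real.exp_pos (w * (b k0 - b kmax)))) (Real.exp_pos (a k0 - a kmax))
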